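/- Let P be an orthogonal polygon, let 𝓡 be a partial solution (a set of rec-packs extendable to a minimum covering of P), and let S be an unambiguous square given 𝓡, i.e., a maximal square covering some simplicial node p of the graph G^𝓡(P) together with all of p's neighbours in G^𝓡(P). Then 𝓡 ∪ {S} is also a partial solution. -/
import Mathlib


open Set

/-- A block: the unit lattice square with the given bottom-left lattice corner. -/
abbrev Blk := ℤ × ℤ

/-- An axis-parallel lattice square: bottom-left corner block and side length. -/
abbrev SqZ := Blk × ℕ

/-- The set of blocks covered by the square `s`. -/
def SqZ.blk (s : SqZ) : Set Blk :=
  {p | s.1.1 ≤ p.1 ∧ p.1 < s.1.1 + (s.2 : ℤ) ∧ s.1.2 ≤ p.2 ∧ p.2 < s.1.2 + (s.2 : ℤ)}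

/-- A rec-pack: corner block, width `t`, strength `η`, and orientation. -/
abbrev RPk := Blk × ℕ × ℕ × Bool

def RPk.t (R : RPk) : ℕ := R.2.1
def RPk.str (R : RPk) : ℕ := R.2.2.1

/-- The extraction of a rec-pack: its `η` side-by-side `t × t` squares. -/
def RPk.ext (R : RPk) : Finset SqZ :=
  (Finset.range (RPk.str R)).image fun i : ℕ =>
    (if R.2.2.2 then (R.1.1 + (i : ℤ) * (RPk.t R : ℤ), R.1.2)
     else (R.1.1, R.1.2 + (i : ℤ) * (RPk.t R : ℤ)), RPk.t R)

/-- The extraction of a set of rec-packs. -/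
def extSet (𝓡 : Finset RPk) : Finset SqZ := 𝓡.biUnion RPk.ext

/-- The set of blocks covered by a finite set of squares. -/
def coveredBy (F : Finset SqZ) : Set Blk := ⋃ s ∈ F, SqZ.blk s

/-- A valid square: nondegenerate and contained in `P`. -/
def ValidSq (P : Set Blk) (s : SqZ) : Prop := 0 < s.2 ∧ SqZ.blk s ⊆ P

def IsCovering (P : Set Blk) (F : Finset SqZ) : Prop :=
  (∀ s ∈ F, ValidSq P s) ∧ coveredBy F = P

def IsMinCovering (P : Set Blk) (F : Finset SqZ) : Prop :=
  IsCovering P F ∧ ∀ F' : Finset SqZ, IsCovering P F' → F.card ≤ F'.card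

/-- A set of rec-packs is a minimum covering of `P` if its extraction is a minimum
square covering of `P` and the extractions are pairwise disjoint. -/
def IsMinRPCovering (P : Set Blk) (𝓡 : Finset RPk) : Prop :=
  IsMinCovering P (extSet 𝓡) ∧
    ∀ R1 ∈ 𝓡, ∀ R2 ∈ 𝓡, R1 ≠ R2 → RPk.ext R1 ∩ RPk.ext R2 = ∅

/-- A partial solution: a set of rec-packs extendable to a minimum covering of `P`. -/
def PartialSol (P : Set Blk) (𝓡 : Finset RPk) : Prop :=
  ∃ 𝓡' : Finset RPk, 𝓡 ⊆ 𝓡' ∧ IsMinRPCovering P 𝓡'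

/-- The blocks covered by the rec-packs of `𝓡`. -/
def rpCovered (𝓡 : Finset RPk) : Set Blk := coveredBy (extSet 𝓡)

/-- Adjacency in `G^𝓡(P)`: two distinct uncovered blocks coverable by one valid square. -/
def AdjR (P : Set Blk) (𝓡 : Finset RPk) (p q : Blk) : Prop :=
  p ≠ q ∧ p ∈ P \ rpCovered 𝓡 ∧ q ∈ P \ rpCovered 𝓡 ∧
    ∃ s : SqZ, ValidSq P s ∧ p ∈ SqZ.blk s ∧ q ∈ SqZ.blk s

/-- A simplicial node of `G^𝓡(P)`: its closed neighbourhood induces a clique. -/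
def SimplicialBlk (P : Set Blk) (𝓡 : Finset RPk) (p : Blk) : Prop :=
  p ∈ P \ rpCovered 𝓡 ∧
    ∀ q r : Blk, AdjR P 𝓡 p q → AdjR P 𝓡 p r → q ≠ r → AdjR P 𝓡 q r

/-- A maximal square: a valid square not contained in any strictly larger valid square. -/
def MaximalSqZ (P : Set Blk) (s : SqZ) : Prop :=
  ValidSq P s ∧ ¬ ∃ s' : SqZ, s.2 < s'.2 ∧ ValidSq P s' ∧ SqZ.blk s ⊆ SqZ.blk s'

/-- `S` is an unambiguous square given a partial solution `𝓡`: a maximal square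
covering some simplicial node `p` of `G^𝓡(P)` together with all of its neighbours. -/
def Unambiguous (P : Set Blk) (𝓡 : Finset RPk) (S : SqZ) : Prop :=
  MaximalSqZ P S ∧ ∃ p : Blk, SimplicialBlk P 𝓡 p ∧ p ∈ SqZ.blk S ∧
    ∀ q : Blk, AdjR P 𝓡 p q → q ∈ SqZ.blk S

/-- A square viewed as a trivial rec-pack (strength 1). -/
def toRP (s : SqZ) : RPk := (s.1, s.2, 1, true)

/-- Rook adjacency of blocks. -/
def adj4 (p q : Blk) : Prop := (p.1 - q.1).natAbs + (p.2 - q.2).natAbs = 1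

/-- A set of blocks is connected (under rook adjacency). -/
def ConnSet (A : Set Blk) : Prop :=
  ∀ p ∈ A, ∀ q ∈ A, Relation.ReflTransGen (fun a b => adj4 a b ∧ a ∈ A ∧ b ∈ A) p q


lemma ext_toRP (s : SqZ) : RPk.ext (toRP s) = {s} := by
  simp [RPk.ext, toRP, RPk.str, RPk.t]

lemma toRP_inj {s t : SqZ} (h : toRP s = toRP t) : s = t := by
  simpa [toRP, Prod.ext_iff] using h

lemma mem_coveredBy {F : Finset SqZ} {x : Blk} :
    x ∈ coveredBy F ↔ ∃ s ∈ F, x ∈ SqZ.blk s := by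
  simp [coveredBy]

lemma extSet_mono {A B : Finset RPk} (h : A ⊆ B) : extSet A ⊆ extSet B :=
  Finset.biUnion_subset_biUnion_of_subset_left _ h

/-- If `𝓡` is a partial solution for an orthogonal polygon `P` without holes (a
finite, connected set of blocks with connected complement) and `S` is an unambiguous
square given `𝓡`, then `𝓡 ∪ {S}` is also a partial solution. -/
theorem unambiguous_extends_partial_solution (P : Set Blk)
    (hfin : P.Finite) (hne : P.Nonempty) (hconn : ConnSet P) (hnohole : ConnSet Pᶜ)
    (𝓡 : Finset RPk) (hPS : PartialSol P 𝓡)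
    (S : SqZ) (hS : Unambiguous P 𝓡 S) :
    PartialSol P (insert (toRP S) 𝓡) := by
  classical
  obtain ⟨⟨hSval, -⟩, p, ⟨⟨hpP, hpunc⟩, -⟩, hpS, hnbr⟩ := hS
  obtain ⟨𝓡', hsub, ⟨⟨hval, hcov⟩, hmincard⟩, hdisj⟩ := hPS
  have hpcov : p ∈ coveredBy (extSet 𝓡') := hcov ▸ hpP
  obtain ⟨s, hsF, hps⟩ := mem_coveredBy.1 hpcov
  obtain ⟨R, hR, hsR⟩ := Finset.mem_biUnion.1 hsF
  have hRnot : R ∉ 𝓡 := fun h =>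
    hpunc (mem_coveredBy.2 ⟨s, Finset.mem_biUnion.2 ⟨R, h, hsR⟩, hps⟩)
  have hsval : ValidSq P s := hval s hsF
  have hsnot : s ∉ extSet 𝓡 := fun h => hpunc (mem_coveredBy.2 ⟨s, h, hps⟩)
  have hpos : 0 < (extSet 𝓡').card := Finset.card_pos.2 ⟨s, hsF⟩
  -- every block of `s` is 𝓡-covered or lies in `S`
  have hkey : SqZ.blk s ⊆ rpCovered 𝓡 ∪ SqZ.blk S := by
    intro q hq
    by_cases hq𝓡 : q ∈ rpCovered 𝓡
    · exact Or.inl hq𝓡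
    · right
      by_cases hqp : q = p
      · exact hqp ▸ hpS
      · exact hnbr q ⟨Ne.symm hqp, ⟨hpP, hpunc⟩, ⟨hsval.2 hq, hq𝓡⟩, s, hsval, hps, hq⟩
  -- `S` coincides with no square of `extSet 𝓡'` other than possibly `s`
  have hSne : ∀ u ∈ extSet 𝓡', S = u → u = s := by
    intro u hu hSu
    by_contra hus
    have hcov' : IsCovering P ((extSet 𝓡').erase s) := by
      refine ⟨fun v hv => hval v (Finset.mem_erase.1 hv).2, Set.Subset.antisymm ?_ ?_⟩
      · intro x hx
        obtain ⟨v, hv, hxv⟩ := mem_coveredBy.1 hx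
        exact (hval v (Finset.mem_erase.1 hv).2).2 hxv
      · intro x hx
        obtain ⟨v, hv, hxv⟩ := mem_coveredBy.1 (hcov ▸ hx : x ∈ coveredBy (extSet 𝓡'))
        by_cases hvs : v = s
        · subst hvs
          rcases hkey hxv with h | h
          · obtain ⟨w, hw, hxw⟩ := mem_coveredBy.1 h
            exact mem_coveredBy.2
              ⟨w, Finset.mem_erase.2 ⟨fun h' => hsnot (h' ▸ hw), extSet_mono hsub hw⟩, hxw⟩
          · refine mem_coveredBy.2 ⟨S, ?_, h⟩
            rw [hSu]; exact Finset.mem_erase.2 ⟨hus, hu⟩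
        · exact mem_coveredBy.2 ⟨v, Finset.mem_erase.2 ⟨hvs, hv⟩, hxv⟩
    have := hmincard _ hcov'
    rw [Finset.card_erase_of_mem hsF] at this
    omega
  -- the new set of rec-packs
  set 𝓝 : Finset RPk :=
    insert (toRP S) ((𝓡'.erase R) ∪ ((RPk.ext R).erase s).image toRP) with h𝓝
  have hS𝓝 : S ∈ extSet 𝓝 :=
    Finset.mem_biUnion.2 ⟨toRP S, Finset.mem_insert_self _ _, by simp [ext_toRP]⟩
  have h𝓡𝓝 : 𝓡 ⊆ 𝓝 := fun x hx =>
    Finset.mem_insert_of_mem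
      (Finset.mem_union_left _ (Finset.mem_erase.2 ⟨fun h => hRnot (h ▸ hx), hsub hx⟩))
  have hsubins : insert (toRP S) 𝓡 ⊆ 𝓝 := by
    intro x hx
    rcases Finset.mem_insert.1 hx with h | h
    · exact h ▸ Finset.mem_insert_self _ _
    · exact h𝓡𝓝 h
  -- classification of the members of 𝓝
  have hclass : ∀ x ∈ 𝓝, x = toRP S ∨ (x ∈ 𝓡' ∧ x ≠ R) ∨
      ∃ s', s' ∈ RPk.ext R ∧ s' ≠ s ∧ x = toRP s' := by
    intro x hx
    rcases Finset.mem_insert.1 hx with h | h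
    · exact Or.inl h
    rcases Finset.mem_union.1 h with h | h
    · exact Or.inr (Or.inl ⟨(Finset.mem_erase.1 h).2, (Finset.mem_erase.1 h).1⟩)
    · obtain ⟨s', hs', he⟩ := Finset.mem_image.1 h
      exact Or.inr (Or.inr ⟨s', (Finset.mem_erase.1 hs').2, (Finset.mem_erase.1 hs').1, he.symm⟩)
  -- the extraction of 𝓝 is contained in `insert S ((extSet 𝓡').erase s)`
  have hesub : extSet 𝓝 ⊆ insert S ((extSet 𝓡').erase s) := by
    intro u hu
    obtain ⟨R'', hR'', huR''⟩ := Finset.mem_biUnion.1 hu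
    rcases hclass R'' hR'' with h | ⟨hm, hn⟩ | ⟨s', hs'R, hs's, he⟩
    · subst h
      rw [ext_toRP, Finset.mem_singleton] at huR''
      exact huR'' ▸ Finset.mem_insert_self _ _
    · refine Finset.mem_insert_of_mem (Finset.mem_erase.2 ⟨?_, Finset.mem_biUnion.2 ⟨R'', hm, huR''⟩⟩)
      intro h'
      subst h'
      have hdj := hdisj R'' hm R hR hn
      exact Finset.notMem_empty u (hdj ▸ Finset.mem_inter.2 ⟨huR'', hsR⟩)
    · subst he
      rw [ext_toRP, Finset.mem_singleton] at huR''
      subst huR''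
      exact Finset.mem_insert_of_mem (Finset.mem_erase.2 ⟨hs's, Finset.mem_biUnion.2 ⟨R, hR, hs'R⟩⟩)
  have hcard : (extSet 𝓝).card ≤ (extSet 𝓡').card := by
    calc (extSet 𝓝).card ≤ (insert S ((extSet 𝓡').erase s)).card := Finset.card_le_card hesub
      _ ≤ ((extSet 𝓡').erase s).card + 1 := Finset.card_insert_le _ _
      _ ≤ (extSet 𝓡').card := by rw [Finset.card_erase_of_mem hsF]; omega
  -- validity of the squares in `extSet 𝓝`
  have hval𝓝 : ∀ u ∈ extSet 𝓝, ValidSq P u := by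
    intro u hu
    rcases Finset.mem_insert.1 (hesub hu) with h | h
    · exact h ▸ hSval
    · exact hval u (Finset.mem_erase.1 h).2
  -- coverage
  have hcov𝓝 : coveredBy (extSet 𝓝) = P := by
    apply Set.Subset.antisymm
    · intro x hx
      obtain ⟨u, hu, hxu⟩ := mem_coveredBy.1 hx
      exact (hval𝓝 u hu).2 hxu
    · intro x hx
      obtain ⟨u, hu, hxu⟩ := mem_coveredBy.1 (hcov ▸ hx : x ∈ coveredBy (extSet 𝓡'))
      by_cases hus : u = s
      · subst hus
        rcases hkey hxu with h | h
        · obtain ⟨w, hw, hxw⟩ := mem_coveredBy.1 h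
          exact mem_coveredBy.2 ⟨w, extSet_mono h𝓡𝓝 hw, hxw⟩
        · exact mem_coveredBy.2 ⟨S, hS𝓝, h⟩
      · obtain ⟨R'', hR'', huR''⟩ := Finset.mem_biUnion.1 hu
        by_cases hRR : R'' = R
        · subst hRR
          refine mem_coveredBy.2 ⟨u, Finset.mem_biUnion.2 ⟨toRP u, ?_, by simp [ext_toRP]⟩, hxu⟩
          exact Finset.mem_insert_of_mem (Finset.mem_union_right _
            (Finset.mem_image_of_mem _ (Finset.mem_erase.2 ⟨hus, huR''⟩)))
        · exact mem_coveredBy.2 ⟨u, Finset.mem_biUnion.2 ⟨R'',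
            Finset.mem_insert_of_mem (Finset.mem_union_left _
              (Finset.mem_erase.2 ⟨hRR, hR''⟩)), huR''⟩, hxu⟩
  -- S is in the extraction of no rec-pack of 𝓡' other than R
  have hSnotext : ∀ R'' ∈ 𝓡', R'' ≠ R → S ∉ RPk.ext R'' := by
    intro R'' hm hn hmem
    have hSs : S = s := hSne S (Finset.mem_biUnion.2 ⟨R'', hm, hmem⟩) rfl
    have hdj := hdisj R'' hm R hR hn
    exact Finset.notMem_empty S (hdj ▸ Finset.mem_inter.2 ⟨hmem, hSs ▸ hsR⟩)
  have hSnotR : ∀ s' ∈ RPk.ext R, s' ≠ s → S ≠ s' := by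
    intro s' hs' hne hSs'
    exact hne (hSne s' (Finset.mem_biUnion.2 ⟨R, hR, hs'⟩) hSs')
  -- pairwise disjoint extractions
  have hdisj𝓝 : ∀ R1 ∈ 𝓝, ∀ R2 ∈ 𝓝, R1 ≠ R2 → RPk.ext R1 ∩ RPk.ext R2 = ∅ := by
    have key : ∀ R1 ∈ 𝓝, ∀ R2 ∈ 𝓝, R1 ≠ R2 →
        ∀ u, u ∈ RPk.ext R1 → u ∈ RPk.ext R2 → False := by
      intro R1 h1 R2 h2 hne u hu1 hu2
      rcases hclass R1 h1 with e1 | ⟨m1, n1⟩ | ⟨s1, hs1, hn1, e1⟩ <;>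
        rcases hclass R2 h2 with e2 | ⟨m2, n2⟩ | ⟨s2, hs2, hn2, e2⟩
      · exact hne (e1.trans e2.symm)
      · subst e1
        rw [ext_toRP, Finset.mem_singleton] at hu1
        exact hSnotext R2 m2 n2 (hu1 ▸ hu2)
      · subst e1; subst e2
        rw [ext_toRP, Finset.mem_singleton] at hu1 hu2
        exact hSnotR s2 hs2 hn2 (hu1.symm.trans hu2)
      · subst e2
        rw [ext_toRP, Finset.mem_singleton] at hu2
        exact hSnotext R1 m1 n1 (hu2 ▸ hu1)
      · have hdj := hdisj R1 m1 R2 m2 hne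
        exact Finset.notMem_empty u (hdj ▸ Finset.mem_inter.2 ⟨hu1, hu2⟩)
      · subst e2
        rw [ext_toRP, Finset.mem_singleton] at hu2
        have hdj := hdisj R1 m1 R hR n1
        exact Finset.notMem_empty u (hdj ▸ Finset.mem_inter.2 ⟨hu1, hu2 ▸ hs2⟩)
      · subst e1; subst e2
        rw [ext_toRP, Finset.mem_singleton] at hu1 hu2
        exact hSnotR s1 hs1 hn1 (hu2.symm.trans hu1)
      · subst e1
        rw [ext_toRP, Finset.mem_singleton] at hu1
        have hdj := hdisj R2 m2 R hR n2
        exact Finset.notMem_empty u (hdj ▸ Finset.mem_inter.2 ⟨hu2, hu1 ▸ hs1⟩)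
      · subst e1; subst e2
        rw [ext_toRP, Finset.mem_singleton] at hu1 hu2
        exact hne (by rw [hu1.symm.trans hu2])
    intro R1 h1 R2 h2 hne
    rw [Finset.eq_empty_iff_forall_notMem]
    intro u hu
    exact key R1 h1 R2 h2 hne u (Finset.mem_inter.1 hu).1 (Finset.mem_inter.1 hu).2
  exact ⟨𝓝, hsubins, ⟨⟨⟨hval𝓝, hcov𝓝⟩,
    fun F' hF' => le_trans hcard (hmincard F' hF')⟩, hdisj𝓝⟩⟩
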